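/- The zero vector is the unique minimizer of the Lasso objective P if and only if λ ≥ λ_max, where λ_max = max_i |⟨a_i, y⟩| = ‖Aᵀy‖_∞. -/
import Mathlib


/-- Euclidean norm of a vector in ℝ^m. -/
noncomputable def norm2 {m : ℕ} (v : Fin m → ℝ) : ℝ := Real.sqrt (∑ i, v i ^ 2)

/-- ℓ1 norm of a vector in ℝ^n. -/
def norm1 {n : ℕ} (x : Fin n → ℝ) : ℝ := ∑ i, |x i|

/-- Canonical inner product on ℝ^m. -/
def dot {m : ℕ} (a u : Fin m → ℝ) : ℝ := ∑ i, a i * u i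

/-- Lasso primal objective P(x) = (1/2)‖y − Ax‖₂² + λ‖x‖₁. -/
noncomputable def Pobj {m n : ℕ} (A : Matrix (Fin m) (Fin n) ℝ) (y : Fin m → ℝ)
    (lam : ℝ) (x : Fin n → ℝ) : ℝ :=
  (1 / 2) * norm2 (y - A.mulVec x) ^ 2 + lam * norm1 x

/-- Lasso dual objective D(u) = (1/2)‖y‖₂² − (1/2)‖y − u‖₂². -/
noncomputable def Dobj {m : ℕ} (y u : Fin m → ℝ) : ℝ :=
  (1 / 2) * norm2 y ^ 2 - (1 / 2) * norm2 (y - u) ^ 2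

/-- Dual feasibility: u ∈ Δ iff |⟨a_i, u⟩| ≤ λ for every column a_i of A. -/
def feas {m n : ℕ} (A : Matrix (Fin m) (Fin n) ℝ) (lam : ℝ) (u : Fin m → ℝ) : Prop :=
  ∀ i : Fin n, |dot (fun j => A j i) u| ≤ lam

lemma norm2_sq {m : ℕ} (v : Fin m → ℝ) : norm2 v ^ 2 = ∑ i, v i ^ 2 := by
  rw [norm2, Real.sq_sqrt (Finset.sum_nonneg fun i _ => sq_nonneg _)]

lemma swap_sum {m n : ℕ} (A : Matrix (Fin m) (Fin n) ℝ) (y : Fin m → ℝ) (x : Fin n → ℝ) :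
    ∑ j, y j * A.mulVec x j = ∑ i, x i * dot (fun j => A j i) y := by
  simp only [Matrix.mulVec, dotProduct, dot, Finset.mul_sum]
  rw [Finset.sum_comm]
  exact Finset.sum_congr rfl fun i _ => Finset.sum_congr rfl fun j _ => by ring

lemma Pdiff {m n : ℕ} (A : Matrix (Fin m) (Fin n) ℝ) (y : Fin m → ℝ) (lam : ℝ)
    (x : Fin n → ℝ) :
    Pobj A y lam x = Pobj A y lam 0 + (1/2) * (∑ j, (A.mulVec x j)^2)
      - (∑ i, x i * dot (fun j => A j i) y) + lam * norm1 x := by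
  simp only [Pobj, norm2_sq, Matrix.mulVec_zero, sub_zero, norm1]
  simp only [abs_zero, Pi.zero_apply, Finset.sum_const_zero, mul_zero, add_zero]
  rw [← swap_sum]
  have : ∀ j, (y - A.mulVec x) j ^ 2 = y j ^ 2 - 2 * (y j * A.mulVec x j) + (A.mulVec x j)^2 := by
    intro j; simp [Pi.sub_apply]; ring
  simp only [this, Finset.sum_add_distrib, Finset.sum_sub_distrib, mul_assoc, ← Finset.mul_sum]
  ring

/-- the zero vector is the unique minimizer of P iff λ ≥ λ_max = max_i |⟨a_i, y⟩|. -/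
theorem lasso_zero_unique_minimizer_iff (m n : ℕ) (hm : 0 < m) (hn : 0 < n)
    (A : Matrix (Fin m) (Fin n) ℝ) (y : Fin m → ℝ) (lam : ℝ) (hlam : 0 < lam) :
    (∀ x : Fin n → ℝ, x ≠ 0 → Pobj A y lam 0 < Pobj A y lam x) ↔
      (Finset.univ.sup' (Finset.univ_nonempty_iff.mpr (Fin.pos_iff_nonempty.mp hn))
        fun i : Fin n => |dot (fun j => A j i) y|) ≤ lam := by
  set c : Fin n → ℝ := fun i => dot (fun j => A j i) y with hc
  constructor
  · intro h
    rw [Finset.sup'_le_iff]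
    intro i _
    by_contra hgt
    push_neg at hgt
    -- column i is nonzero
    have hS : 0 < ∑ j, (A j i)^2 := by
      rcases (Finset.sum_nonneg fun j (_ : j ∈ Finset.univ) => sq_nonneg (A j i)).lt_or_eq with h' | h'
      · exact h'
      · exfalso
        have hz : ∀ j, A j i = 0 := by
          intro j
          have := (Finset.sum_eq_zero_iff_of_nonneg
            (fun j (_ : j ∈ Finset.univ) => sq_nonneg (A j i))).mp h'.symm j (Finset.mem_univ j)
          exact pow_eq_zero_iff (by norm_num) |>.mp this
        have hz2 : dot (fun j => A j i) y = 0 := by simp [dot, hz]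
        rw [hz2] at hgt; simp at hgt; linarith
    set S := ∑ j, (A j i)^2 with hSdef
    set t : ℝ := (|c i| - lam) / S with ht
    have htpos : 0 < t := div_pos (by linarith) hS
    set s : ℝ := if 0 ≤ c i then 1 else -1 with hs
    set v : ℝ := t * s with hv
    have hvc : v * c i = t * |c i| := by
      rw [hv, hs]; split_ifs with h'
      · rw [abs_of_nonneg h']; ring
      · rw [abs_of_neg (lt_of_not_ge h')]; ring
    have hvabs : |v| = t := by
      rw [hv, hs]; split_ifs <;> simp [abs_of_pos htpos, abs_of_nonneg htpos.le]
    have hvne : v ≠ 0 := fun h' => by rw [h'] at hvabs; simp at hvabs; linarith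
    set x : Fin n → ℝ := Pi.single i v with hx
    have hxne : x ≠ 0 := fun h' => hvne (by
      have := congrFun h' i
      simpa [hx] using this)
    have hmv : A.mulVec x = fun j => A j i * v := by
      funext j
      simp [hx, Matrix.mulVec, dotProduct, Pi.single_apply, Finset.sum_ite_eq']
    have hsum1 : ∑ k, x k * c k = t * |c i| := by
      rw [hx, ← hvc]
      simp [Pi.single_apply, Finset.sum_ite_eq']
    have hn1 : norm1 x = t := by
      rw [hx, norm1, ← hvabs]
      simp [Pi.single_apply, apply_ite abs, Finset.sum_ite_eq']
    have hsq : ∑ j, (A.mulVec x j)^2 = t^2 * S := by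
      rw [hmv, hSdef, Finset.mul_sum]
      refine Finset.sum_congr rfl fun j _ => ?_
      have : v^2 = t^2 := by rw [← sq_abs v, hvabs]
      rw [mul_pow, this]; ring
    have hP : Pobj A y lam x < Pobj A y lam 0 := by
      rw [Pdiff]
      have : (1/2) * (t^2 * S) - t * |c i| + lam * t < 0 := by
        have hts : t * S = |c i| - lam := by
          rw [ht]; field_simp
        nlinarith [mul_pos htpos hS, mul_pos (mul_pos htpos htpos) hS]
      rw [hsq, hsum1, hn1]
      linarith
    exact absurd (h x hxne) (not_lt.mpr hP.le)
  · intro hmax x hxne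
    have hci : ∀ i, |c i| ≤ lam := fun i =>
      le_trans (Finset.le_sup' (fun i : Fin n => |dot (fun j => A j i) y|)
        (Finset.mem_univ i)) hmax
    conv_rhs => rw [Pdiff]
    have hT : ∑ i, x i * c i ≤ lam * norm1 x := by
      rw [norm1, Finset.mul_sum]
      refine Finset.sum_le_sum fun i _ => ?_
      calc x i * c i ≤ |x i * c i| := le_abs_self _
        _ = |x i| * |c i| := abs_mul _ _
        _ ≤ |x i| * lam := mul_le_mul_of_nonneg_left (hci i) (abs_nonneg _)
        _ = lam * |x i| := mul_comm _ _
    have hSnn : 0 ≤ ∑ j, (A.mulVec x j)^2 :=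
      Finset.sum_nonneg fun j _ => sq_nonneg _
    simp only [hc] at hT
    rcases hSnn.lt_or_eq with hS | hS
    · linarith
    · -- Ax = 0, so ∑ x i * c i = 0, and norm1 x > 0
      have hmz : ∀ j, A.mulVec x j = 0 := by
        intro j
        have := (Finset.sum_eq_zero_iff_of_nonneg
          (fun j (_ : j ∈ Finset.univ) => sq_nonneg (A.mulVec x j))).mp hS.symm j (Finset.mem_univ j)
        exact pow_eq_zero_iff (by norm_num) |>.mp this
      have hT0 : ∑ i, x i * c i = 0 := by
        rw [hc, ← swap_sum]
        simp [hmz]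
      have hn1pos : 0 < norm1 x := by
        obtain ⟨i, hi⟩ := Function.ne_iff.mp hxne
        refine Finset.sum_pos' (fun i _ => abs_nonneg _) ⟨i, Finset.mem_univ i, ?_⟩
        simpa [abs_pos] using hi
      simp only [hc] at hT0
      rw [hT0, ← hS]
      have := mul_pos hlam hn1pos
      linarith
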